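/- arXiv:1305.1070 — 3 statements merged into one kernel-verified Lean document; each statement's English description precedes it below -/
import Mathlib

section
/- Let A = L D L^T be an invertible complex matrix with L lower unitriangular and D block diagonal, and let G = A^{-1}. Then G satisfies the Takahashi identity G = (I − L^T) G + D^{-1} L^{-1}. -/
open Matrix

/-- Takahashi identity G = (I − Lᵀ) G + D⁻¹ L⁻¹ for A = L D Lᵀ. -/
theorem stmt1 {n : ℕ} (L D A : Matrix (Fin n) (Fin n) ℂ)
    (hLlower : ∀ i j : Fin n, i < j → L i j = 0)
    (hLdiag : ∀ i : Fin n, L i i = 1)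
    (hLu : IsUnit L) (hDu : IsUnit D)
    (hA : A = L * D * Lᵀ) (hAu : IsUnit A) :
    A⁻¹ = (1 - Lᵀ) * A⁻¹ + D⁻¹ * L⁻¹ := by
  have hLTu : IsUnit Lᵀ := by
    rwa [Matrix.isUnit_iff_isUnit_det, Matrix.det_transpose,
      ← Matrix.isUnit_iff_isUnit_det]
  have hAinv : A⁻¹ = Lᵀ⁻¹ * (D⁻¹ * L⁻¹) := by
    rw [hA, Matrix.mul_inv_rev, Matrix.mul_inv_rev]
  rw [Matrix.sub_mul, Matrix.one_mul, hAinv, ← Matrix.mul_assoc Lᵀ,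
    Matrix.mul_nonsing_inv _ ((Matrix.isUnit_iff_isUnit_det _).mp hLTu),
    Matrix.one_mul, sub_add_cancel]
end

section
/- Let A = [[A_11, A_12],[A_21, A_22]] be invertible with A_11 invertible, G = A^{-1}, Σ = diag(Σ_11, Σ_22), and G^< = G Σ G^†. Then the (1,2) block satisfies G^<_{12} = −A_11^{-1} A_12 G^<_{22} + A_11^{-1} Σ_11 (G_{21})^†. -/
open Matrix

/-- G^<₁₂ = −A11⁻¹ A12 G^<₂₂ + A11⁻¹ Σ₁₁ G₂₁†. -/
theorem stmt16 {m n : Type*} [Fintype m] [Fintype n] [DecidableEq m] [DecidableEq n]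
    (A11 : Matrix m m ℂ) (A12 : Matrix m n ℂ) (A21 : Matrix n m ℂ) (A22 : Matrix n n ℂ)
    (A : Matrix (m ⊕ n) (m ⊕ n) ℂ)
    (hA : A = Matrix.fromBlocks A11 A12 A21 A22)
    (hAu : IsUnit A) (h11 : IsUnit A11)
    (Sig11 : Matrix m m ℂ) (Sig22 : Matrix n n ℂ)
    (Sig : Matrix (m ⊕ n) (m ⊕ n) ℂ)
    (hSig : Sig = Matrix.fromBlocks Sig11 0 0 Sig22)
    (G Gless : Matrix (m ⊕ n) (m ⊕ n) ℂ)
    (hG : G = A⁻¹) (hGless : Gless = G * Sig * Gᴴ) :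
    Gless.toBlocks₁₂
      = -(A11⁻¹ * A12 * Gless.toBlocks₂₂) + A11⁻¹ * Sig11 * (G.toBlocks₂₁)ᴴ := by
  set G11 := G.toBlocks₁₁ with hG11
  set G12 := G.toBlocks₁₂ with hG12
  set G21 := G.toBlocks₂₁ with hG21
  set G22 := G.toBlocks₂₂ with hG22
  have hGb : G = Matrix.fromBlocks G11 G12 G21 G22 := (Matrix.fromBlocks_toBlocks G).symm
  have hdA : IsUnit A.det := (Matrix.isUnit_iff_isUnit_det A).mp hAu
  have hd11 : IsUnit A11.det := (Matrix.isUnit_iff_isUnit_det A11).mp h11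
  have hinv : A11⁻¹ * A11 = 1 := Matrix.nonsing_inv_mul A11 hd11
  have hAG : A * G = 1 := by rw [hG]; exact Matrix.mul_nonsing_inv A hdA
  rw [hA, hGb, Matrix.fromBlocks_multiply, ← Matrix.fromBlocks_one] at hAG
  have e11 : A11 * G11 + A12 * G21 = 1 := congrArg Matrix.toBlocks₁₁ hAG
  have e12 : A11 * G12 + A12 * G22 = 0 := congrArg Matrix.toBlocks₁₂ hAG
  have hG12' : G12 = -(A11⁻¹ * A12 * G22) := by
    have := congrArg (fun X => A11⁻¹ * X) e12
    simp only [Matrix.mul_add, ← Matrix.mul_assoc, hinv, Matrix.one_mul, Matrix.mul_zero] at this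
    linear_combination (norm := noncomm_ring) this
  have hG11' : G11 = A11⁻¹ - A11⁻¹ * A12 * G21 := by
    have := congrArg (fun X => A11⁻¹ * X) e11
    simp only [Matrix.mul_add, ← Matrix.mul_assoc, hinv, Matrix.one_mul, Matrix.mul_one] at this
    linear_combination (norm := noncomm_ring) this
  have hGl : Gless = Matrix.fromBlocks
      (G11 * Sig11 * G11ᴴ + G12 * Sig22 * G12ᴴ) (G11 * Sig11 * G21ᴴ + G12 * Sig22 * G22ᴴ)
      (G21 * Sig11 * G11ᴴ + G22 * Sig22 * G12ᴴ) (G21 * Sig11 * G21ᴴ + G22 * Sig22 * G22ᴴ) := by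
    rw [hGless, hGb, hSig, Matrix.fromBlocks_conjTranspose, Matrix.fromBlocks_multiply,
      Matrix.fromBlocks_multiply]
    simp [Matrix.mul_assoc]
  have l12 : Gless.toBlocks₁₂ = G11 * Sig11 * G21ᴴ + G12 * Sig22 * G22ᴴ :=
    congrArg Matrix.toBlocks₁₂ hGl
  have l22 : Gless.toBlocks₂₂ = G21 * Sig11 * G21ᴴ + G22 * Sig22 * G22ᴴ :=
    congrArg Matrix.toBlocks₂₂ hGl
  rw [l12, l22, hG12', hG11']
  simp only [Matrix.sub_mul, Matrix.add_mul, Matrix.mul_add, Matrix.neg_mul, Matrix.mul_neg,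
    Matrix.mul_assoc]
  abel
end

section
/- Let A be a block tridiagonal, complex symmetric, invertible matrix with N diagonal blocks, with each leading principal block submatrix invertible. Define recursively the RGF forward quantities: g_1 = A_{11}^{-1}, g_i = (A_{ii} − A_{i-1,i}^T g_{i-1} A_{i-1,i})^{-1} for i = 2,…,N. Then g_N equals the (N,N) diagonal block of A^{-1}. -/
open Matrix

/-- Splitting off the last block of indices. -/
def splitEquiv (k m : ℕ) : ((Fin (k + 1) × Fin m) ⊕ Fin m) ≃ (Fin (k + 1 + 1) × Fin m) where
  toFun := Sum.elim (fun p => (p.1.castSucc, p.2)) (fun b => (Fin.last (k + 1), b))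
  invFun := fun q => if h : (q.1 : ℕ) < k + 1 then Sum.inl (⟨q.1, h⟩, q.2) else Sum.inr q.2
  left_inv := by
    rintro (⟨p1, p2⟩ | b)
    · simp [p1.isLt]
    · simp [Fin.last]
  right_inv := by
    rintro ⟨q1, q2⟩
    by_cases h : (q1 : ℕ) < k + 1
    · simp [h]
    · simp only [h, dif_neg, not_false_iff, Sum.elim_inr]
      have : q1 = Fin.last (k + 1) := by
        apply Fin.ext
        simp only [Fin.val_last]
        omega
      rw [this]

/-- Collapsing a one-block index. -/
def oneProdEquiv (m : ℕ) : (Fin 1 × Fin m) ≃ Fin m where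
  toFun := fun p => p.2
  invFun := fun b => (0, b)
  left_inv := by rintro ⟨p1, p2⟩; simp [Subsingleton.elim p1 0]
  right_inv := fun b => rfl

/-- for a block tridiagonal complex symmetric invertible matrix A
with N = n+1 diagonal blocks (each of size m), all of whose leading principal
block submatrices are invertible, the RGF forward recursion
g₁ = A₁₁⁻¹, gᵢ = (Aᵢᵢ − Aᵢ₋₁,ᵢᵀ gᵢ₋₁ Aᵢ₋₁,ᵢ)⁻¹ produces, in its last step,
the (N,N) diagonal block of A⁻¹. -/
theorem stmt19 {n m : ℕ}
    (A : Matrix (Fin (n + 1) × Fin m) (Fin (n + 1) × Fin m) ℂ)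
    (Ab : Fin (n + 1) → Fin (n + 1) → Matrix (Fin m) (Fin m) ℂ)
    (hAb : ∀ i j a b, Ab i j a b = A (i, a) (j, b))
    (hAu : IsUnit A) (hAsym : Aᵀ = A)
    (htri : ∀ i j : Fin (n + 1), ((i : ℕ) + 1 < (j : ℕ) ∨ (j : ℕ) + 1 < (i : ℕ)) →
      Ab i j = 0)
    (hlead : ∀ k : Fin (n + 1),
      IsUnit (A.submatrix
        (fun p : Fin ((k : ℕ) + 1) × Fin m => ((Fin.castLE k.isLt p.1 : Fin (n + 1)), p.2))
        (fun p : Fin ((k : ℕ) + 1) × Fin m => ((Fin.castLE k.isLt p.1 : Fin (n + 1)), p.2))))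
    (g : Fin (n + 1) → Matrix (Fin m) (Fin m) ℂ)
    (hg0 : g 0 = (Ab 0 0)⁻¹)
    (hgrec : ∀ (i : Fin (n + 1)) (h : (i : ℕ) + 1 < n + 1),
      g ⟨(i : ℕ) + 1, h⟩ =
        (Ab ⟨(i : ℕ) + 1, h⟩ ⟨(i : ℕ) + 1, h⟩
          - (Ab i ⟨(i : ℕ) + 1, h⟩)ᵀ * g i * Ab i ⟨(i : ℕ) + 1, h⟩)⁻¹) :
    g (Fin.last n) = fun a b => A⁻¹ (Fin.last n, a) (Fin.last n, b) := by
  have key : ∀ (k : ℕ) (hk : k < n + 1),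
      g ⟨k, hk⟩ = fun a b =>
        (A.submatrix
          (fun p : Fin (k + 1) × Fin m => ((Fin.castLE hk p.1 : Fin (n + 1)), p.2))
          (fun p : Fin (k + 1) × Fin m => ((Fin.castLE hk p.1 : Fin (n + 1)), p.2)))⁻¹
          (Fin.last k, a) (Fin.last k, b) := by
    intro k
    induction k with
    | zero =>
      intro hk
      have h0 : (⟨0, hk⟩ : Fin (n + 1)) = 0 := rfl
      rw [h0, hg0]
      have h1 : ∀ p1 : Fin 1, (Fin.castLE hk p1 : Fin (n + 1)) = 0 := by
        intro p1
        apply Fin.ext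
        simp only [Fin.coe_castLE, Fin.val_zero]
        omega
      have hsub : A.submatrix
          (fun p : Fin (0 + 1) × Fin m => ((Fin.castLE hk p.1 : Fin (n + 1)), p.2))
          (fun p : Fin (0 + 1) × Fin m => ((Fin.castLE hk p.1 : Fin (n + 1)), p.2))
          = (Ab 0 0).submatrix (oneProdEquiv m) (oneProdEquiv m) := by
        ext p q
        simp [hAb, h1, oneProdEquiv]
      rw [hsub, inv_submatrix_equiv]
      rfl
    | succ k ih =>
      intro hk
      have hk0 : k < n + 1 := by omega
      set K : Fin (n + 1) := ⟨k, hk0⟩ with hK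
      set K1 : Fin (n + 1) := ⟨k + 1, hk⟩ with hK1
      set f1 : Fin (k + 1 + 1) × Fin m → Fin (n + 1) × Fin m :=
        fun p => ((Fin.castLE hk p.1 : Fin (n + 1)), p.2) with hf1
      set P : Matrix (Fin (k + 1) × Fin m) (Fin (k + 1) × Fin m) ℂ :=
        A.submatrix (fun p => ((Fin.castLE hk0 p.1 : Fin (n + 1)), p.2))
                    (fun p => ((Fin.castLE hk0 p.1 : Fin (n + 1)), p.2)) with hP
      set Q : Matrix (Fin (k + 1) × Fin m) (Fin m) ℂ :=
        Matrix.of fun p b => A ((Fin.castLE hk0 p.1 : Fin (n + 1)), p.2) (K1, b) with hQdef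
      set R : Matrix (Fin m) (Fin (k + 1) × Fin m) ℂ :=
        Matrix.of fun b p => A (K1, b) ((Fin.castLE hk0 p.1 : Fin (n + 1)), p.2) with hRdef
      set S : Matrix (Fin m) (Fin m) ℂ := Ab K1 K1 with hS
      set e := splitEquiv k m with he
      have hc1 : (Fin.castLE hk (Fin.last (k + 1)) : Fin (n + 1)) = K1 := rfl
      have hblock : ((A.submatrix f1 f1).submatrix e e : Matrix _ _ ℂ) = fromBlocks P Q R S := by
        ext i j
        cases i <;> cases j <;>
          simp [splitEquiv, fromBlocks, hAb, he, hf1, hP, hQdef, hRdef, hS, submatrix_apply, hc1]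
      letI iT : Invertible (A.submatrix f1 f1) := (hlead K1).invertible
      letI iFB : Invertible (fromBlocks P Q R S) :=
        hblock ▸ submatrixEquivInvertible (A.submatrix f1 f1) e e
      letI iP : Invertible P := (hlead K).invertible
      letI iSchur : Invertible (S - R * ⅟P * Q) := invertibleOfFromBlocks₁₁Invertible P Q R S
      have hQ : Q = Matrix.of fun p b => if p.1 = Fin.last k then Ab K K1 p.2 b else 0 := by
        ext ⟨p1, p2⟩ b
        by_cases h : p1 = Fin.last k
        · subst h
          simp [hQdef, hAb]
          rfl
        · have hv : (p1 : ℕ) ≠ k := by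
            intro hc
            exact h (Fin.ext (by simp [hc]))
          have hz : Ab (Fin.castLE hk0 p1) K1 = 0 := by
            apply htri
            left
            simp only [Fin.coe_castLE, hK1]
            omega
          have hz' : A ((Fin.castLE hk0 p1 : Fin (n + 1)), p2) (K1, b) = 0 := by
            rw [← hAb, hz]
            rfl
          simp [hQdef, h, hz']
      have hR : R = Qᵀ := by
        ext b p
        show A (K1, b) _ = A _ (K1, b)
        conv_rhs => rw [← hAsym]
        rw [Matrix.transpose_apply]
      have hIH : ∀ a b, g K a b = P⁻¹ (Fin.last k, a) (Fin.last k, b) := by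
        intro a b
        rw [hK, ih hk0]
      set E : Matrix (Fin (k + 1) × Fin m) (Fin m) ℂ :=
        (1 : Matrix (Fin (k + 1) × Fin m) (Fin (k + 1) × Fin m) ℂ).submatrix id
          (fun a => (Fin.last k, a)) with hE
      have hQE : Q = E * Ab K K1 := by
        rw [hQ]
        ext ⟨p1, p2⟩ b
        by_cases h : p1 = Fin.last k
        · subst h
          simp [hE, Matrix.mul_apply, Matrix.one_apply, Prod.ext_iff]
        · simp [hE, Matrix.mul_apply, Matrix.one_apply, Prod.ext_iff, h]
      have hEPE : Eᵀ * P⁻¹ * E = g K := by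
        ext a b
        rw [hIH]
        simp [hE, Matrix.mul_apply, Matrix.one_apply, Matrix.transpose_apply,
          Matrix.submatrix_apply, Finset.sum_ite_eq, Finset.sum_ite_eq']
      have hmul : R * ⅟P * Q = (Ab K K1)ᵀ * g K * Ab K K1 := by
        rw [invOf_eq_nonsing_inv, hR, hQE, ← hEPE, Matrix.transpose_mul]
        simp only [Matrix.mul_assoc]
      have hg1 : g K1 = (S - R * ⅟P * Q)⁻¹ := by
        rw [hmul, hS]
        exact hgrec K hk
      funext a b
      have hA1 : A.submatrix f1 f1 = (fromBlocks P Q R S).submatrix e.symm e.symm := by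
        ext i j
        rw [← hblock]
        simp
      rw [hA1, inv_submatrix_equiv]
      have hesymm : ∀ a : Fin m, e.symm (Fin.last (k + 1), a) = Sum.inr a := by
        intro a
        simp [he, splitEquiv, Equiv.symm, Fin.last]
      show g K1 a b = (fromBlocks P Q R S)⁻¹ (e.symm (Fin.last (k + 1), a)) (e.symm (Fin.last (k + 1), b))
      rw [hesymm, hesymm, ← invOf_eq_nonsing_inv, invOf_fromBlocks₁₁_eq]
      show g K1 a b = ⅟(S - R * ⅟P * Q) a b
      rw [invOf_eq_nonsing_inv, ← hg1]
  have hlast := key n (Nat.lt_succ_self n)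
  have hid : (fun p : Fin (n + 1) × Fin m =>
      ((Fin.castLE (Nat.lt_succ_self n) p.1 : Fin (n + 1)), p.2)) = id := by
    funext p
    exact Prod.ext (Fin.ext rfl) rfl
  rw [hid, Matrix.submatrix_id_id] at hlast
  exact hlast
end
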